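/- Let μ, τ be real numbers and σ > 0. The supremum of E[((X − τ)₊)²] over all real-valued random variables X (equivalently, Borel probability measures on ℝ) satisfying E[X] = μ and E[X²] = σ² + μ² equals ((μ − τ)₊)² + σ². -/

import Mathlib

open MeasureTheory Filter

lemma integrable_dirac'' {f : ℝ → ℝ} (hf : Measurable f) (a : ℝ) :
    Integrable f (Measure.dirac a) := by
  refine ⟨hf.aestronglyMeasurable, ?_⟩
  rw [HasFiniteIntegral, lintegral_dirac' _ (by measurability)]
  exact ENNReal.coe_lt_top

lemma twoPoint (a b q p : ℝ) (hq : 0 ≤ q) (hp : 0 ≤ p) (hqp : q + p = 1) :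
    ∃ m : Measure ℝ, IsProbabilityMeasure m ∧
      (∀ f : ℝ → ℝ, Measurable f → Integrable f m) ∧
      (∀ f : ℝ → ℝ, Measurable f → (∫ x, f x ∂m) = q * f a + p * f b) := by
  refine ⟨ENNReal.ofReal q • Measure.dirac a + ENNReal.ofReal p • Measure.dirac b, ?_, ?_, ?_⟩
  · constructor
    simp [Measure.add_apply, Measure.smul_apply, ← ENNReal.ofReal_add hq hp, hqp]
  · intro f hf
    exact ((integrable_dirac'' hf a).smul_measure ENNReal.ofReal_ne_top).add_measure
      ((integrable_dirac'' hf b).smul_measure ENNReal.ofReal_ne_top)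
  · intro f hf
    rw [integral_add_measure
      ((integrable_dirac'' hf a).smul_measure ENNReal.ofReal_ne_top)
      ((integrable_dirac'' hf b).smul_measure ENNReal.ofReal_ne_top),
      integral_smul_measure, integral_smul_measure, integral_dirac, integral_dirac,
      ENNReal.toReal_ofReal hq, ENNReal.toReal_ofReal hp]
    simp [smul_eq_mul]

/-- Sharp upper second partial moment bound (C6): the supremum of `E[((X - τ)₊)²]`
over Borel probability measures on `ℝ` with mean `μ` and second moment `σ² + μ²`
equals `((μ - τ)₊)² + σ²`. -/
theorem stmt_17 (μ τ σ : ℝ) (hσ : 0 < σ) :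
    sSup {p : ℝ | ∃ m : Measure ℝ, IsProbabilityMeasure m ∧
        Integrable (fun x : ℝ => x) m ∧ Integrable (fun x : ℝ => x ^ 2) m ∧
        (∫ x, x ∂m) = μ ∧ (∫ x, x ^ 2 ∂m) = σ ^ 2 + μ ^ 2 ∧
        p = ∫ x, (max (x - τ) 0) ^ 2 ∂m} =
      (max (μ - τ) 0) ^ 2 + σ ^ 2 := by
  set c : ℝ := max (μ - τ) 0 with hc
  -- the two-point family
  have hmaxmeas : Measurable fun x : ℝ => (max (x - τ) 0) ^ 2 :=
    (((measurable_id.sub measurable_const).max measurable_const).pow_const 2)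
  have construct : ∀ t : ℝ, 1 ≤ t →
      ((1 - σ^2/(σ^2+t^2)) * (max ((μ - σ^2/t) - τ) 0)^2
        + (σ^2/(σ^2+t^2)) * (max ((μ + t) - τ) 0)^2) ∈
      {p : ℝ | ∃ m : Measure ℝ, IsProbabilityMeasure m ∧
        Integrable (fun x : ℝ => x) m ∧ Integrable (fun x : ℝ => x ^ 2) m ∧
        (∫ x, x ∂m) = μ ∧ (∫ x, x ^ 2 ∂m) = σ ^ 2 + μ ^ 2 ∧
        p = ∫ x, (max (x - τ) 0) ^ 2 ∂m} := by
    intro t ht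
    have ht0 : (0:ℝ) < t := lt_of_lt_of_le one_pos ht
    have hd : (0:ℝ) < σ^2 + t^2 := by positivity
    have hp0 : 0 ≤ σ^2/(σ^2+t^2) := by positivity
    have hp1 : σ^2/(σ^2+t^2) ≤ 1 := by
      rw [div_le_one hd]; nlinarith
    obtain ⟨m, hprob, hint, hval⟩ :=
      twoPoint (μ - σ^2/t) (μ + t) (1 - σ^2/(σ^2+t^2)) (σ^2/(σ^2+t^2))
        (by linarith) hp0 (by ring)
    refine ⟨m, hprob, hint _ measurable_id, hint _ (measurable_id.pow_const 2), ?_, ?_, ?_⟩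
    · rw [hval (fun x => x) measurable_id]
      field_simp
      ring
    · rw [hval (fun x => x ^ 2) (measurable_id.pow_const 2)]
      field_simp
      ring
    · rw [hval _ hmaxmeas]
  refine csSup_eq_of_forall_le_of_forall_lt_exists_gt ⟨_, construct 1 le_rfl⟩ ?_ ?_
  · -- upper bound
    rintro p ⟨m, hprob, hx, hx2, hmean, hsq, rfl⟩
    have hint : Integrable (fun x : ℝ => (x - (μ - c))^2) m := by
      have he : (fun x : ℝ => (x - (μ - c))^2)
          = fun x : ℝ => (x^2 - (2*(μ-c))*x) + (μ-c)^2 := by funext x; ring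
      rw [he]
      exact (hx2.sub (hx.const_mul _)).add (integrable_const _)
    have hptw : ∀ x : ℝ, (max (x - τ) 0)^2 ≤ (x - (μ - c))^2 := by
      intro x
      rcases le_or_gt (x - τ) 0 with h | h
      · rw [max_eq_right h]; simpa using sq_nonneg (x - (μ - c))
      · rw [max_eq_left h.le]
        have h1 : x - τ ≤ x - (μ - c) := by
          have := le_max_left (μ - τ) (0:ℝ); rw [← hc] at this; linarith
        nlinarith
    have hintegrand : Integrable (fun x : ℝ => (max (x - τ) 0)^2) m := by
      refine hint.mono' hmaxmeas.aestronglyMeasurable (ae_of_all _ fun x => ?_)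
      rw [Real.norm_eq_abs, abs_of_nonneg (by positivity)]
      exact hptw x
    have hle : (∫ x, (max (x - τ) 0)^2 ∂m) ≤ ∫ x, (x - (μ - c))^2 ∂m :=
      integral_mono hintegrand hint hptw
    have hcomp : (∫ x, (x - (μ - c))^2 ∂m) = σ^2 + c^2 := by
      have he : (fun x : ℝ => (x - (μ - c))^2)
          = fun x : ℝ => (x^2 - 2*(μ-c)*x) + (μ-c)^2 := by funext x; ring
      have hI2 : Integrable (fun x : ℝ => 2*(μ-c)*x) m := hx.const_mul _
      have hI1 : Integrable (fun x : ℝ => x^2 - 2*(μ-c)*x) m := hx2.sub hI2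
      have h3 : (∫ x, 2*(μ-c)*x ∂m) = 2*(μ-c)*μ := by
        rw [integral_const_mul, hmean]
      rw [he, integral_add hI1 (integrable_const _), integral_sub hx2 hI2, h3, hsq,
        integral_const, probReal_univ]
      simp; ring
    rw [hcomp] at hle
    linarith
  · -- approach from below
    intro w hw
    set V : ℝ → ℝ := fun t => (1 - σ^2/(σ^2+t^2)) * (max ((μ - σ^2/t) - τ) 0)^2
        + (σ^2/(σ^2+t^2)) * (max ((μ + t) - τ) 0)^2 with hV
    have hden : Tendsto (fun t : ℝ => σ^2 + t^2) atTop atTop :=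
      tendsto_atTop_add_const_left _ _ (tendsto_pow_atTop two_ne_zero)
    have hp0 : Tendsto (fun t : ℝ => σ^2/(σ^2+t^2)) atTop (nhds 0) :=
      Tendsto.div_atTop tendsto_const_nhds hden
    have hq1 : Tendsto (fun t : ℝ => 1 - σ^2/(σ^2+t^2)) atTop (nhds 1) := by
      simpa using tendsto_const_nhds.sub hp0
    have ha : Tendsto (fun t : ℝ => μ - σ^2/t) atTop (nhds μ) := by
      simpa using tendsto_const_nhds.sub
        (Tendsto.div_atTop (tendsto_const_nhds (x := σ^2)) tendsto_id)
    have hmax : Tendsto (fun t : ℝ => (max ((μ - σ^2/t) - τ) 0)^2) atTop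
        (nhds ((max (μ - τ) 0)^2)) :=
      ((ha.sub_const τ).max tendsto_const_nhds).pow 2
    have hsecond : Tendsto (fun t : ℝ => (σ^2/(σ^2+t^2)) * (max ((μ + t) - τ) 0)^2)
        atTop (nhds (σ^2)) := by
      have heq : ∀ᶠ t in atTop, σ^2 * ((1 + (μ - τ)/t)^2 / (σ^2/t^2 + 1))
          = (σ^2/(σ^2+t^2)) * (max ((μ + t) - τ) 0)^2 := by
        filter_upwards [eventually_gt_atTop (0:ℝ), eventually_gt_atTop (τ - μ)] with t ht hτ
        rw [max_eq_left (by linarith)]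
        field_simp
        ring
      have hlim : Tendsto (fun t : ℝ => σ^2 * ((1 + (μ - τ)/t)^2 / (σ^2/t^2 + 1)))
          atTop (nhds (σ^2)) := by
        have h1 : Tendsto (fun t : ℝ => (μ - τ)/t) atTop (nhds 0) :=
          Tendsto.div_atTop tendsto_const_nhds tendsto_id
        have h2 : Tendsto (fun t : ℝ => σ^2/t^2) atTop (nhds 0) :=
          Tendsto.div_atTop tendsto_const_nhds (tendsto_pow_atTop two_ne_zero)
        have := (((tendsto_const_nhds (x := (1:ℝ))).add h1).pow 2).div
          (h2.add (tendsto_const_nhds (x := (1:ℝ)))) (by norm_num)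
        simpa using tendsto_const_nhds.mul this
      exact hlim.congr' heq
    have hVlim : Tendsto V atTop (nhds ((max (μ - τ) 0)^2 + σ^2)) := by
      have := (hq1.mul hmax).add hsecond
      simpa using this
    obtain ⟨t, htw, ht1⟩ :=
      ((hVlim.eventually (eventually_gt_nhds hw)).and (eventually_ge_atTop 1)).exists
    exact ⟨V t, construct t ht1, htw⟩
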